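/- Let B be a unital C*-algebra and E a full Hilbert B-module (the closed span of ⟨E,E⟩ equals B). Then some finite direct sum E^n contains a unit vector: there exist n ∈ ℕ and X ∈ E^n with ⟨X,X⟩ = 1. -/

import Mathlib

/-- **A full Hilbert module over a unital C*-algebra has a unit vector in some `Eⁿ`.**
If `E` is a full Hilbert `B`-module (the closed span of `⟨E,E⟩` is all of `B`),
then there are `n ∈ ℕ` and `X ∈ Eⁿ` with `⟨X,X⟩ = ∑ ⟨Xᵢ,Xᵢ⟩ = 1`. -/
theorem full_module_unit_vector_in_power
    {B E : Type*} [NormedRing B] [StarRing B] [CStarRing B] [CompleteSpace B]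
    [NormedAlgebra ℂ B] [StarModule ℂ B] [PartialOrder B] [StarOrderedRing B]
    [NormedAddCommGroup E] [CompleteSpace E]
    (r : E → B → E)                                  -- the right module action
    (hr_add : ∀ x y b, r (x + y) b = r x b + r y b)
    (hr_add' : ∀ x b c, r x (b + c) = r x b + r x c)
    (hr_mul : ∀ x b c, r (r x b) c = r x (b * c))
    (ip : E → E → B)                                  -- the B-valued inner product
    (h_pos : ∀ x, 0 ≤ ip x x)
    (h_addr : ∀ x y z, ip x (y + z) = ip x y + ip x z)
    (h_linr : ∀ x y b, ip x (r y b) = ip x y * b)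
    (h_sym : ∀ x y, star (ip x y) = ip y x)
    (h_defin : ∀ x, ip x x = 0 → x = 0)
    (h_norm : ∀ x, ‖x‖ = Real.sqrt ‖ip x x‖)
    (h_full : Dense (↑(Submodule.span ℂ {b : B | ∃ x y : E, ip x y = b}) : Set B)) :
    ∃ (n : ℕ) (X : Fin n → E), ∑ i, ip (X i) (X i) = 1 := by
  letI : CStarAlgebra B := { }
  -- additivity and linearity in the first argument
  have h_addl : ∀ x y z : E, ip (x + y) z = ip x z + ip y z := fun x y z => by
    rw [← h_sym, h_addr, star_add, h_sym, h_sym]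
  have h_linl : ∀ (x y : E) (b : B), ip (r x b) y = star b * ip x y := fun x y b => by
    rw [← h_sym, h_linr, star_mul, h_sym]
  -- find an element of the span close to 1
  obtain ⟨c, hc_mem, hc⟩ :
      ∃ c ∈ (Submodule.span ℂ {b : B | ∃ x y : E, ip x y = b} : Submodule ℂ B),
        ‖(1 : B) - c‖ < 1 / 2 := by
    have h1 := h_full 1
    rw [Metric.mem_closure_iff] at h1
    obtain ⟨c, hc, hd⟩ := h1 (1 / 2) (by norm_num)
    exact ⟨c, hc, by rwa [dist_eq_norm] at hd⟩
  rw [Submodule.mem_span_set'] at hc_mem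
  obtain ⟨n, f, g, hg⟩ := hc_mem
  choose x y hxy using fun i => (g i).2
  set y' : Fin n → E := fun i => r (y i) (f i • 1) with hy'
  have hterm : ∀ i, f i • (g i : B) = ip (x i) (y' i) := fun i => by
    rw [hy', h_linr, hxy, mul_smul_comm, mul_one]
  have hc_eq : c = ∑ i, ip (x i) (y' i) := by
    rw [← hg]; exact Finset.sum_congr rfl fun i _ => hterm i
  set u : Fin n → E := fun i => x i + y' i with hu
  set P : B := ∑ i, ip (u i) (u i) with hP
  set Q : B := ∑ i, (ip (x i) (x i) + ip (y' i) (y' i)) with hQ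
  have hexpand : ∀ i, ip (u i) (u i) =
      (ip (x i) (y' i) + ip (y' i) (x i)) + (ip (x i) (x i) + ip (y' i) (y' i)) := fun i => by
    rw [hu]; simp only [h_addl, h_addr]; abel
  have hstar : star c = ∑ i, ip (y' i) (x i) := by
    rw [hc_eq, star_sum]; exact Finset.sum_congr rfl fun i _ => h_sym _ _
  have hP_eq : P = (c + star c) + Q := by
    rw [hP, Finset.sum_congr rfl fun i _ => hexpand i, Finset.sum_add_distrib,
      Finset.sum_add_distrib, ← hc_eq, ← hstar, hQ]
  -- P is positive
  have hQ0 : 0 ≤ Q := Finset.sum_nonneg fun i _ => add_nonneg (h_pos _) (h_pos _)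
  have hP0 : 0 ≤ P := Finset.sum_nonneg fun i _ => h_pos _
  -- 1 ≤ P
  have halg : ∀ s : ℝ, 0 ≤ s → 0 ≤ algebraMap ℝ B s := fun s hs => by
    have h1 : algebraMap ℝ B s
        = star (algebraMap ℝ B (Real.sqrt s)) * algebraMap ℝ B (Real.sqrt s) := by
      rw [← algebraMap_star_comm, star_trivial, ← map_mul, Real.mul_self_sqrt hs]
    rw [h1]; exact star_mul_self_nonneg _
  have h1h : (1 : B) ≤ c + star c := by
    have hsa : IsSelfAdjoint ((1 - c) + star (1 - c)) := by
      rw [IsSelfAdjoint, star_add, star_star, add_comm]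
    have hnorm2 : ‖(1 - c) + star (1 - c)‖ ≤ 1 := by
      calc ‖(1 - c) + star (1 - c)‖ ≤ ‖(1 : B) - c‖ + ‖star ((1 : B) - c)‖ := norm_add_le _ _
        _ = ‖(1 : B) - c‖ + ‖(1 : B) - c‖ := by rw [norm_star]
        _ ≤ 1 := by linarith
    have hle : (1 - c) + star (1 - c) ≤ 1 := by
      calc (1 - c) + star (1 - c) ≤ algebraMap ℝ B ‖(1 - c) + star (1 - c)‖ :=
            IsSelfAdjoint.le_algebraMap_norm_self hsa
        _ ≤ 1 := by
            have := halg (1 - ‖(1 - c) + star (1 - c)‖) (by linarith)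
            rw [map_sub, map_one] at this
            exact sub_nonneg.mp this
    rw [← sub_nonneg]
    have he : c + star c - 1 = 1 - ((1 - c) + star (1 - c)) := by
      rw [star_sub, star_one]; abel
    rw [he]
    exact sub_nonneg.mpr hle
  have h1P : (1 : B) ≤ P := by
    rw [hP_eq]
    calc (1 : B) ≤ c + star c := h1h
      _ ≤ (c + star c) + Q := le_add_of_nonneg_right hQ0
  -- P is invertible
  have hPunit : IsUnit P := CStarAlgebra.isUnit_of_le 1 h1P isStrictlyPositive_one
  -- the inverse square root
  set b : B := P ^ (-(1 / 2) : ℝ) with hb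
  have hb0 : (0 : B) ≤ b := CFC.rpow_nonneg
  have hbsa : star b = b := (IsSelfAdjoint.of_nonneg hb0)
  have hkey : b * P * b = 1 := CFC.conjugate_rpow_neg_one_half P (IsStrictlyPositive.iff_of_unital.mpr ⟨hP0, hPunit⟩)
  refine ⟨n, fun i => r (u i) b, ?_⟩
  have : ∀ i, ip (r (u i) b) (r (u i) b) = b * (ip (u i) (u i) * b) := fun i => by
    rw [h_linl, h_linr, hbsa]
  rw [Finset.sum_congr rfl fun i _ => this i, ← Finset.mul_sum, ← Finset.sum_mul, ← hP,
    ← mul_assoc, hkey]
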